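/- For all integers m, n ≥ 1, the Legendre exponential functions satisfy the weighted orthogonality relation ∫₀¹ 2^x E_m(x) E_n(x) dx = δ_{mn}/(2 ln 2 · (2n−1)). -/

import Mathlib

open Polynomial MeasureTheory Real Filter

/-- The Legendre polynomial of degree `n`, via the Rodrigues formula
`P_n(x) = 1/(2^n n!) dⁿ/dxⁿ (x² - 1)ⁿ`. -/
noncomputable def legendre (n : ℕ) : Polynomial ℝ :=
  (1 / (2 ^ n * n.factorial) : ℝ) • derivative^[n] ((X ^ 2 - 1) ^ n)

/-- The shifted Legendre polynomial `P̃_n(x) = P_n(2x - 1)` on `[0,1]`. -/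
noncomputable def shiftedLegendre (n : ℕ) (x : ℝ) : ℝ :=
  (legendre n).eval (2 * x - 1)

/-- The altered Legendre polynomial `A_n(x) = ((x+1)/2) P̃_{n-1}(x)` for `n ≥ 1`. -/
noncomputable def alteredLegendre (n : ℕ) (x : ℝ) : ℝ :=
  ((x + 1) / 2) * shiftedLegendre (n - 1) x

/-- The Legendre exponential function `E_n(x) = (-1)^{n-1} A_n(2^{1-x} - 1)`. -/
noncomputable def legendreExp (n : ℕ) (x : ℝ) : ℝ :=
  (-1) ^ (n - 1) * alteredLegendre n ((2 : ℝ) ^ (1 - x) - 1)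


lemma poly_ibp (p q : ℝ[X]) (a b : ℝ) :
    ∫ x in a..b, (derivative p).eval x * q.eval x =
      p.eval b * q.eval b - p.eval a * q.eval a -
        ∫ x in a..b, p.eval x * (derivative q).eval x := by
  have h := intervalIntegral.integral_deriv_mul_eq_sub_of_hasDerivAt
    (a := a) (b := b)
    (u := fun x => p.eval x) (v := fun x => q.eval x)
    (u' := fun x => (derivative p).eval x) (v' := fun x => (derivative q).eval x)
    (p.continuous).continuousOn (q.continuous).continuousOn
    (fun x _ => p.hasDerivAt x) (fun x _ => q.hasDerivAt x)
    ((derivative p).continuous.intervalIntegrable a b)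
    ((derivative q).continuous.intervalIntegrable a b)
  rw [intervalIntegral.integral_add (f := fun x => (derivative p).eval x * q.eval x)
    (g := fun x => p.eval x * (derivative q).eval x)
    (((derivative p).continuous.mul q.continuous).intervalIntegrable a b)
    ((p.continuous.mul (derivative q).continuous).intervalIntegrable a b)] at h
  linarith

lemma vanish {n k : ℕ} (hk : k < n) {x : ℝ} (hx : x ^ 2 - 1 = 0) :
    (derivative^[k] ((X ^ 2 - 1 : ℝ[X]) ^ n)).eval x = 0 := by
  obtain ⟨r, hr⟩ := pow_sub_dvd_iterate_derivative_pow (X ^ 2 - 1 : ℝ[X]) n k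
  rw [hr]
  simp only [eval_mul, eval_pow, eval_sub, eval_one, eval_X]
  rw [hx, zero_pow (by omega), zero_mul]

lemma ibp_iter (n : ℕ) (f : ℝ[X])
    (hf : ∀ k < n, ∀ x : ℝ, x ^ 2 - 1 = 0 → (derivative^[k] f).eval x = 0) (g : ℝ[X]) :
    ∫ x in (-1:ℝ)..1, (derivative^[n] f).eval x * g.eval x =
      (-1) ^ n * ∫ x in (-1:ℝ)..1, f.eval x * (derivative^[n] g).eval x := by
  induction n generalizing g with
  | zero => simp
  | succ n ih =>
    rw [Function.iterate_succ_apply', poly_ibp,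
      hf n (by omega) 1 (by norm_num), hf n (by omega) (-1) (by norm_num),
      ih (fun k hk => hf k (by omega)) (derivative g), ← Function.iterate_succ_apply]
    ring

lemma int_pow (n : ℕ) :
    ∫ x in (-1:ℝ)..1, (x ^ 2 - 1) ^ n =
      (-1) ^ n * 2 ^ (2 * n + 1) * (n.factorial : ℝ) ^ 2 / ((2 * n + 1).factorial : ℝ) := by
  induction n with
  | zero => norm_num
  | succ n ih =>
    have hd : ∀ x : ℝ, HasDerivAt (fun x => x * (x ^ 2 - 1) ^ (n + 1))
        ((2 * n + 3) * (x ^ 2 - 1) ^ (n + 1) + (2 * n + 2) * (x ^ 2 - 1) ^ n) x := by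
      intro x
      have h1 : HasDerivAt (fun x : ℝ => x * (x ^ 2 - 1) ^ (n + 1))
          (1 * (x ^ 2 - 1) ^ (n + 1) +
            x * ((n + 1 : ℕ) * (x ^ 2 - 1) ^ n * (2 * x))) x := by
        exact (hasDerivAt_id x).mul
          (((hasDerivAt_pow 2 x).sub_const 1).pow (n + 1) |>.congr_deriv (by push_cast; ring))
      convert h1 using 1
      have hx : x * (x ^ 2 - 1) ^ n * x = (x ^ 2 - 1) ^ (n + 1) + (x ^ 2 - 1) ^ n := by
        rw [pow_succ]; ring
      push_cast
      nlinarith [hx]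
    have h0 : ∫ x in (-1:ℝ)..1,
        ((2 * n + 3) * (x ^ 2 - 1) ^ (n + 1) + (2 * n + 2) * (x ^ 2 - 1) ^ n) = 0 := by
      rw [intervalIntegral.integral_eq_sub_of_hasDerivAt (fun x _ => hd x)
        (Continuous.intervalIntegrable (by continuity) _ _)]
      norm_num
    rw [intervalIntegral.integral_add
        (f := fun x : ℝ => (2 * (n:ℝ) + 3) * (x ^ 2 - 1) ^ (n + 1))
        (g := fun x : ℝ => (2 * (n:ℝ) + 2) * (x ^ 2 - 1) ^ n)
        ((continuous_const.mul (by continuity)).intervalIntegrable _ _)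
        ((continuous_const.mul (by continuity)).intervalIntegrable _ _),
      intervalIntegral.integral_const_mul, intervalIntegral.integral_const_mul, ih] at h0
    have key : (∫ x in (-1:ℝ)..1, (x ^ 2 - 1) ^ (n + 1)) =
        -(2 * n + 2) / (2 * n + 3) *
          ((-1) ^ n * 2 ^ (2 * n + 1) * (n.factorial : ℝ) ^ 2 / ((2 * n + 1).factorial : ℝ)) := by
      have h3 : (2 * (n:ℝ) + 3) ≠ 0 := by positivity
      field_simp at h0 ⊢
      linarith
    rw [key]
    have hfac : ((2 * (n + 1) + 1).factorial : ℝ) =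
        (2 * n + 3) * ((2 * n + 2) * ((2 * n + 1).factorial : ℝ)) := by
      have : 2 * (n + 1) + 1 = (2 * n + 1) + 1 + 1 := by ring
      rw [this, Nat.factorial_succ, Nat.factorial_succ]
      push_cast; ring
    have hfac2 : ((n + 1).factorial : ℝ) = (n + 1) * n.factorial := by
      rw [Nat.factorial_succ]; push_cast; ring
    have hne : ((2 * n + 1).factorial : ℝ) ≠ 0 := by positivity
    rw [hfac, hfac2]
    field_simp
    ring

lemma monic_fn (n : ℕ) : ((X ^ 2 - 1 : ℝ[X]) ^ n).Monic := by
  have : (X ^ 2 - 1 : ℝ[X]) = X ^ 2 - C 1 := by rw [map_one]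
  rw [this]
  exact (monic_X_pow_sub_C (1 : ℝ) (two_ne_zero)).pow n

lemma natDegree_fn (n : ℕ) : ((X ^ 2 - 1 : ℝ[X]) ^ n).natDegree = 2 * n := by
  have h2 : (X ^ 2 - 1 : ℝ[X]).natDegree = 2 := by
    have : (X ^ 2 - 1 : ℝ[X]) = X ^ 2 - C 1 := by rw [map_one]
    rw [this, natDegree_X_pow_sub_C]
  rw [natDegree_pow, h2, mul_comm]

lemma top_deriv (n : ℕ) :
    derivative^[2 * n] ((X ^ 2 - 1 : ℝ[X]) ^ n) = C (((2 * n).factorial : ℝ)) := by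
  have hd : (derivative^[2 * n] ((X ^ 2 - 1 : ℝ[X]) ^ n)).natDegree ≤ 0 := by
    refine le_trans (natDegree_iterate_derivative _ _) ?_
    rw [natDegree_fn]; omega
  rw [Polynomial.eq_C_of_natDegree_le_zero hd, coeff_iterate_derivative]
  congr 1
  rw [zero_add, Nat.descFactorial_self]
  have : ((X ^ 2 - 1 : ℝ[X]) ^ n).coeff (2 * n) = 1 := by
    have := (monic_fn n).leadingCoeff
    rwa [leadingCoeff, natDegree_fn] at this
  rw [this]
  simp

lemma legendre_orth_le (m n : ℕ) (h : m ≤ n) :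
    ∫ x in (-1:ℝ)..1, (legendre n).eval x * (legendre m).eval x =
      if m = n then 2 / (2 * (n : ℝ) + 1) else 0 := by
  have cmne : ((m.factorial : ℝ)) ≠ 0 := by positivity
  have cnne : ((n.factorial : ℝ)) ≠ 0 := by positivity
  simp only [legendre, eval_smul, smul_eq_mul]
  have hsplit : ∀ x : ℝ,
      1 / (2 ^ n * (n.factorial : ℝ)) * (derivative^[n] ((X ^ 2 - 1 : ℝ[X]) ^ n)).eval x *
        (1 / (2 ^ m * (m.factorial : ℝ)) * (derivative^[m] ((X ^ 2 - 1 : ℝ[X]) ^ m)).eval x) =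
      (1 / (2 ^ n * (n.factorial : ℝ)) * (1 / (2 ^ m * (m.factorial : ℝ)))) *
        ((derivative^[n] ((X ^ 2 - 1 : ℝ[X]) ^ n)).eval x *
          (derivative^[m] ((X ^ 2 - 1 : ℝ[X]) ^ m)).eval x) := fun x => by ring
  rw [intervalIntegral.integral_congr (g := fun x =>
      (1 / (2 ^ n * (n.factorial : ℝ)) * (1 / (2 ^ m * (m.factorial : ℝ)))) *
        ((derivative^[n] ((X ^ 2 - 1 : ℝ[X]) ^ n)).eval x *
          (derivative^[m] ((X ^ 2 - 1 : ℝ[X]) ^ m)).eval x)) (fun x _ => hsplit x),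
    intervalIntegral.integral_const_mul]
  have heval : ∀ x : ℝ, (derivative^[m] ((X ^ 2 - 1 : ℝ[X]) ^ m)).eval x =
      ((derivative^[m] ((X ^ 2 - 1 : ℝ[X]) ^ m))).eval x := fun _ => rfl
  have hkey := ibp_iter n ((X ^ 2 - 1 : ℝ[X]) ^ n)
    (fun k hk x hx => vanish hk hx) (derivative^[m] ((X ^ 2 - 1 : ℝ[X]) ^ m))
  rw [hkey]
  rcases eq_or_lt_of_le h with rfl | hlt
  · -- m = n case
    simp only [if_pos rfl, ↓reduceIte]
    have hdd : derivative^[m] (derivative^[m] ((X ^ 2 - 1 : ℝ[X]) ^ m)) =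
        C (((2 * m).factorial : ℝ)) := by
      rw [← Function.iterate_add_apply, show m + m = 2 * m from by ring, top_deriv]
    rw [hdd]
    have : (∫ x in (-1:ℝ)..1, ((X ^ 2 - 1 : ℝ[X]) ^ m).eval x *
        (C (((2 * m).factorial : ℝ))).eval x) =
        ((2 * m).factorial : ℝ) * ∫ x in (-1:ℝ)..1, (x ^ 2 - 1) ^ m := by
      rw [← intervalIntegral.integral_const_mul]
      apply intervalIntegral.integral_congr
      intro x _
      simp [mul_comm]
    rw [this, int_pow]
    have h1 : ((2 * m + 1).factorial : ℝ) = (2 * m + 1) * ((2 * m).factorial : ℝ) := by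
      rw [Nat.factorial_succ]; push_cast; ring
    have h2 : ((2 * m).factorial : ℝ) ≠ 0 := by positivity
    have h3 : (2 * (m : ℝ) + 1) ≠ 0 := by positivity
    have h4 : ((2:ℝ) ^ m) ≠ 0 := by positivity
    rw [h1]
    have hpow : ((2:ℝ)) ^ (2 * m + 1) = 2 * ((2:ℝ) ^ m) ^ 2 := by
      rw [pow_succ, ← pow_mul, mul_comm m 2]; ring
    rw [hpow]
    have h5 : ((-1:ℝ)) ^ m * (-1) ^ m = 1 := by
      rw [← pow_add, ← two_mul, pow_mul]; norm_num
    field_simp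
    ring_nf
    have h6 : ((-1:ℝ)) ^ (m * 2) = 1 := by rw [mul_comm, pow_mul]; norm_num
    rw [h6]
  · -- m < n case
    have hz : derivative^[n] (derivative^[m] ((X ^ 2 - 1 : ℝ[X]) ^ m)) = 0 := by
      rw [← Function.iterate_add_apply]
      apply iterate_derivative_eq_zero
      rw [natDegree_fn]; omega
    rw [hz]
    simp [Nat.ne_of_lt hlt]

lemma legendre_orth (m n : ℕ) :
    ∫ x in (-1:ℝ)..1, (legendre m).eval x * (legendre n).eval x =
      if m = n then 2 / (2 * (n : ℝ) + 1) else 0 := by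
  rcases le_total m n with h | h
  · rw [intervalIntegral.integral_congr
      (g := fun x => (legendre n).eval x * (legendre m).eval x) (fun x _ => mul_comm _ _)]
    exact legendre_orth_le m n h
  · rw [legendre_orth_le n m h]
    rcases eq_or_ne m n with rfl | hne
    · simp
    · simp [hne, Ne.symm hne]

lemma shifted_orth (m n : ℕ) :
    ∫ x in (0:ℝ)..1, shiftedLegendre m x * shiftedLegendre n x =
      if m = n then 1 / (2 * (n : ℝ) + 1) else 0 := by
  have h := intervalIntegral.smul_integral_comp_mul_add
    (f := fun t => (legendre m).eval t * (legendre n).eval t) (a := (0:ℝ)) (b := 1) 2 (-1)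
  simp only [smul_eq_mul] at h
  norm_num at h
  have h2 : ∀ x : ℝ, shiftedLegendre m x * shiftedLegendre n x =
      (fun t => (legendre m).eval t * (legendre n).eval t) (2 * x + -1) := by
    intro x; simp [_root_.shiftedLegendre, sub_eq_add_neg]
  rw [intervalIntegral.integral_congr (fun x _ => h2 x)]
  have hh : (∫ x in (0:ℝ)..1,
      (fun t => (legendre m).eval t * (legendre n).eval t) (2 * x + -1)) =
      (∫ x in (-1:ℝ)..1, (legendre m).eval x * (legendre n).eval x) / 2 := by
    rw [← h]; ring
  rw [hh, legendre_orth m n]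
  split
  · ring
  · ring

/-- Weighted orthogonality of the Legendre exponential functions:
`∫₀¹ 2^x E_m(x) E_n(x) dx = δ_{mn}/(2 ln 2 (2n-1))`. -/
theorem legendreExp_orthogonality (m n : ℕ) (hm : 1 ≤ m) (hn : 1 ≤ n) :
    ∫ x in (0:ℝ)..1, (2 : ℝ) ^ x * legendreExp m x * legendreExp n x =
      (if m = n then 1 else 0) / (2 * Real.log 2 * (2 * (n : ℝ) - 1)) := by
  obtain ⟨a, rfl⟩ : ∃ a, m = a + 1 := ⟨m - 1, by omega⟩
  obtain ⟨b, rfl⟩ : ∃ b, n = b + 1 := ⟨n - 1, by omega⟩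
  have hL : Real.log 2 ≠ 0 := ne_of_gt (Real.log_pos (by norm_num))
  set g : ℝ → ℝ := fun u => shiftedLegendre a u * shiftedLegendre b u with hg
  have hgc : Continuous g := by
    apply Continuous.mul <;>
    · show Continuous fun u => (legendre _).eval (2 * u - 1)
      exact (Polynomial.continuous _).comp (by continuity)
  set f : ℝ → ℝ := fun x => (2 : ℝ) ^ (1 - x) - 1 with hf
  set f' : ℝ → ℝ := fun x => -((2 : ℝ) ^ (1 - x) * Real.log 2) with hf'
  have hderiv : ∀ x : ℝ, HasDerivAt f (f' x) x := by
    intro x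
    have h1 : HasDerivAt (fun y : ℝ => (2 : ℝ) ^ y) ((2:ℝ) ^ (1 - x) * Real.log 2) (1 - x) :=
      (Real.hasStrictDerivAt_const_rpow (by norm_num) (1 - x)).hasDerivAt
    have h2 : HasDerivAt (fun y : ℝ => 1 - y) (-1) x := by
      simpa using (hasDerivAt_id x).const_sub 1
    have := (h1.comp x h2).sub_const 1
    simpa [hf, hf', mul_comm] using this
  have hrpow_cont : Continuous fun x : ℝ => (2:ℝ) ^ (1 - x) := by
    have he : ∀ x : ℝ, (2:ℝ) ^ (1 - x) = Real.exp (Real.log 2 * (1 - x)) := by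
      intro x; rw [Real.rpow_def_of_pos (by norm_num)]
    simp only [he]
    exact Real.continuous_exp.comp (by continuity)
  have hf'c : Continuous f' := by
    simp only [hf']
    exact (hrpow_cont.mul continuous_const).neg
  have hcv := intervalIntegral.integral_comp_smul_deriv (a := (0:ℝ)) (b := 1)
    (f := f) (f' := f') (g := g) (fun x _ => hderiv x) hf'c.continuousOn hgc
  have hf0 : f 0 = 1 := by simp [hf]; norm_num
  have hf1 : f 1 = 0 := by simp [hf]
  rw [hf0, hf1] at hcv
  have key : ∀ S T px pnx L : ℝ, px * pnx = 1 → L ≠ 0 →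
      px * ((-1:ℝ)^a * ((2*pnx - 1 + 1)/2 * S)) * ((-1:ℝ)^b * ((2*pnx - 1 + 1)/2 * T)) =
      ((-1:ℝ)^(a+b) / (-(2*L))) * (-(2*pnx*L) * (S*T)) := by
    intro S T px pnx L h hLne
    rw [pow_add]
    field_simp
    linear_combination (4 * pnx * S * T) * h
  have hpt : ∀ x : ℝ, (2 : ℝ) ^ x * legendreExp (a+1) x * legendreExp (b+1) x =
      ((-1 : ℝ) ^ (a + b) / (-(2 * Real.log 2))) * (f' x • (g ∘ f) x) := by
    intro x
    have h2x : (2:ℝ) ^ (1 - x) = 2 * (2:ℝ) ^ (-x) := by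
      rw [show (1 : ℝ) - x = 1 + -x from by ring, Real.rpow_add (by norm_num), Real.rpow_one]
    have hxx : (2:ℝ) ^ x * (2:ℝ) ^ (-x) = 1 := by
      rw [← Real.rpow_add (by norm_num)]; simp
    simp only [legendreExp, alteredLegendre, Nat.add_sub_cancel, Function.comp_apply,
      smul_eq_mul, hf', hg, hf, h2x]
    exact key _ _ _ _ _ hxx hL
  rw [intervalIntegral.integral_congr (fun x _ => hpt x),
    intervalIntegral.integral_const_mul, hcv, intervalIntegral.integral_symm,
    shifted_orth a b]
  rcases eq_or_ne a b with rfl | hne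
  · simp only [if_pos rfl]
    have h1 : ((-1:ℝ)) ^ (a + a) = 1 := by rw [← two_mul, pow_mul]; norm_num
    rw [h1]
    have h2 : (2 * ((a:ℝ)+1) - 1) = 2 * (a:ℝ) + 1 := by ring
    push_cast
    rw [h2]
    have h3 : (2 * (a:ℝ) + 1) ≠ 0 := by positivity
    field_simp
  · have hne' : a + 1 ≠ b + 1 := by omega
    simp [hne, hne']
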